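/- Let P and P' be row-stochastic matrices on Fin S, r, r' : Fin S → ℝ, β real, π a stationary distribution of P with mean J_μ, combined metric J_{μ,σ}, and performance potential g. For δ ∈ [0,1] set P^δ = P + δ•(P' - P) and r^δ = r + δ•(r' - r), let π^δ be a stationary distribution of P^δ, set J^δ_μ = ∑_i π^δ i * r^δ i, f^δ i = (1-δ)*(r i - β*(r i - J^δ_μ)^2) + δ*(r' i - β*(r' i - J^δ_μ)^2), and J^δ_{μ,σ} = ∑_i π^δ i * f^δ i. Then J^δ_{μ,σ} - J_{μ,σ} = δ * ∑_i π^δ i * ( ∑_j (P' i j - P i j) * g j + r' i - β*(r' i - J_μ)^2 - r i + β*(r i - J_μ)^2 ) + β*(J^δ_μ - J_μ)^2. -/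

import Mathlib

/-- Mixed-policy performance difference formula (equation (32)). -/
theorem mean_variance_mixed_policy_difference
    (S : ℕ) (hS : 1 ≤ S)
    (P P' : Matrix (Fin S) (Fin S) ℝ)
    (hP0 : ∀ i j, 0 ≤ P i j) (hP1 : ∀ i, ∑ j, P i j = 1)
    (hP'0 : ∀ i j, 0 ≤ P' i j) (hP'1 : ∀ i, ∑ j, P' i j = 1)
    (π : Fin S → ℝ)
    (hπ0 : ∀ i, 0 ≤ π i) (hπ1 : ∑ i, π i = 1)
    (hπstat : ∀ j, ∑ i, π i * P i j = π j)
    (r r' : Fin S → ℝ) (β : ℝ)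
    (Jmu Jms : ℝ)
    (hJmu : Jmu = ∑ i, π i * r i)
    (hJms : Jms = Jmu - β * ∑ i, π i * (r i - Jmu) ^ 2)
    (g : Fin S → ℝ)
    (hg : ∀ i, g i = r i - β * (r i - Jmu) ^ 2 - Jms + ∑ j, P i j * g j)
    (δ : ℝ) (hδ : δ ∈ Set.Icc (0 : ℝ) 1)
    (πδ : Fin S → ℝ)
    (hπδ0 : ∀ i, 0 ≤ πδ i) (hπδ1 : ∑ i, πδ i = 1)
    (hπδstat : ∀ j, ∑ i, πδ i * (P i j + δ * (P' i j - P i j)) = πδ j)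
    (Jδmu Jδms : ℝ)
    (hJδmu : Jδmu = ∑ i, πδ i * (r i + δ * (r' i - r i)))
    (hJδms : Jδms = ∑ i, πδ i *
      ((1 - δ) * (r i - β * (r i - Jδmu) ^ 2)
        + δ * (r' i - β * (r' i - Jδmu) ^ 2))) :
    Jδms - Jms =
      δ * (∑ i, πδ i * ((∑ j, (P' i j - P i j) * g j)
        + r' i - β * (r' i - Jmu) ^ 2 - r i + β * (r i - Jmu) ^ 2))
      + β * (Jδmu - Jmu) ^ 2 := by
  -- basic sums
  set s1 := ∑ i, πδ i * r i with hs1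
  set s1' := ∑ i, πδ i * r' i with hs1'
  set s2 := ∑ i, πδ i * r i ^ 2 with hs2
  set s2' := ∑ i, πδ i * r' i ^ 2 with hs2'
  set sg := ∑ i, πδ i * g i with hsg
  set spg := ∑ i, πδ i * ∑ j, P i j * g j with hspg
  set sp'g := ∑ i, πδ i * ∑ j, P' i j * g j with hsp'g
  -- generic linear-combination sum lemma
  have hsum : ∀ (a b c d e : ℝ),
      ∑ i, πδ i * (a * r i + b * r i ^ 2 + c * r' i + d * r' i ^ 2 + e)
        = a * s1 + b * s2 + c * s1' + d * s2' + e := by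
    intro a b c d e
    have h : ∀ i : Fin S, πδ i * (a * r i + b * r i ^ 2 + c * r' i + d * r' i ^ 2 + e)
        = a * (πδ i * r i) + b * (πδ i * r i ^ 2) + c * (πδ i * r' i)
          + d * (πδ i * r' i ^ 2) + e * πδ i := fun i => by ring
    simp_rw [h, Finset.sum_add_distrib, ← Finset.mul_sum]
    rw [hπδ1]; ring
  -- mixed mean
  have hA : Jδmu = (1 - δ) * s1 + δ * s1' := by
    rw [hJδmu]
    have h : ∀ i : Fin S, πδ i * (r i + δ * (r' i - r i))
        = πδ i * ((1 - δ) * r i + 0 * r i ^ 2 + δ * r' i + 0 * r' i ^ 2 + 0) :=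
      fun i => by ring
    simp_rw [h, hsum]; try ring
  -- mixed combined metric
  have hB : Jδms = ((1 - δ) * (1 + 2 * β * Jδmu)) * s1 + (-(1 - δ) * β) * s2
      + (δ * (1 + 2 * β * Jδmu)) * s1' + (-δ * β) * s2' + (-(β * Jδmu ^ 2)) := by
    rw [hJδms]
    have h : ∀ i : Fin S, πδ i * ((1 - δ) * (r i - β * (r i - Jδmu) ^ 2)
          + δ * (r' i - β * (r' i - Jδmu) ^ 2))
        = πδ i * (((1 - δ) * (1 + 2 * β * Jδmu)) * r i + (-(1 - δ) * β) * r i ^ 2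
          + (δ * (1 + 2 * β * Jδmu)) * r' i + (-δ * β) * r' i ^ 2 + (-(β * Jδmu ^ 2))) :=
      fun i => by ring
    simp_rw [h, hsum]
  -- Poisson equation summed against πδ
  have hPo : sg - spg = (1 + 2 * β * Jmu) * s1 + (-β) * s2 + 0 * s1' + 0 * s2'
      + (-(β * Jmu ^ 2) - Jms) := by
    rw [hsg, hspg, ← Finset.sum_sub_distrib]
    have h : ∀ i : Fin S, πδ i * g i - πδ i * ∑ j, P i j * g j
        = πδ i * ((1 + 2 * β * Jmu) * r i + (-β) * r i ^ 2 + 0 * r' i + 0 * r' i ^ 2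
            + (-(β * Jmu ^ 2) - Jms)) := by
      intro i
      have hgi := hg i
      have h6 : g i - ∑ j, P i j * g j = r i - β * (r i - Jmu) ^ 2 - Jms := by linarith
      calc πδ i * g i - πδ i * ∑ j, P i j * g j
          = πδ i * (g i - ∑ j, P i j * g j) := by ring
        _ = _ := by rw [h6]; ring
    simp_rw [h, hsum]
  -- stationarity key: sg = spg + δ * (sp'g - spg)
  have hD : sg = spg + δ * (sp'g - spg) := by
    have key : ∑ i, πδ i * ∑ j, (P i j + δ * (P' i j - P i j)) * g j = sg := by
      have h1 : ∀ i : Fin S, πδ i * ∑ j, (P i j + δ * (P' i j - P i j)) * g j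
          = ∑ j, πδ i * (P i j + δ * (P' i j - P i j)) * g j := by
        intro i; rw [Finset.mul_sum]; exact Finset.sum_congr rfl fun j _ => by ring
      simp_rw [h1]
      rw [Finset.sum_comm]
      have h2 : ∀ j : Fin S, ∑ i, πδ i * (P i j + δ * (P' i j - P i j)) * g j
          = πδ j * g j := by
        intro j
        rw [← Finset.sum_mul, hπδstat j]
      simp_rw [h2]
      exact hsg.symm
    have h3 : ∑ i, πδ i * ∑ j, (P i j + δ * (P' i j - P i j)) * g j
        = spg + δ * (sp'g - spg) := by
      have h4 : ∀ i : Fin S, πδ i * ∑ j, (P i j + δ * (P' i j - P i j)) * g j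
          = πδ i * ∑ j, P i j * g j
            + δ * (πδ i * ∑ j, P' i j * g j - πδ i * ∑ j, P i j * g j) := by
        intro i
        have h5 : ∑ j, (P i j + δ * (P' i j - P i j)) * g j
            = ∑ j, P i j * g j + δ * ∑ j, P' i j * g j - δ * ∑ j, P i j * g j := by
          rw [Finset.mul_sum, Finset.mul_sum, ← Finset.sum_add_distrib,
            ← Finset.sum_sub_distrib]
          exact Finset.sum_congr rfl fun j _ => by ring
        rw [h5]; ring
      simp_rw [h4]
      rw [Finset.sum_add_distrib, ← Finset.mul_sum, Finset.sum_sub_distrib]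
    rw [← key, h3]
  -- the RHS big sum
  have hR : ∑ i, πδ i * ((∑ j, (P' i j - P i j) * g j)
        + r' i - β * (r' i - Jmu) ^ 2 - r i + β * (r i - Jmu) ^ 2)
      = (sp'g - spg) + ((-(1 + 2 * β * Jmu)) * s1 + β * s2
        + (1 + 2 * β * Jmu) * s1' + (-β) * s2' + 0) := by
    have h : ∀ i : Fin S, πδ i * ((∑ j, (P' i j - P i j) * g j)
          + r' i - β * (r' i - Jmu) ^ 2 - r i + β * (r i - Jmu) ^ 2)
        = (πδ i * ∑ j, P' i j * g j - πδ i * ∑ j, P i j * g j)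
          + πδ i * ((-(1 + 2 * β * Jmu)) * r i + β * r i ^ 2
            + (1 + 2 * β * Jmu) * r' i + (-β) * r' i ^ 2 + 0) := by
      intro i
      have h5 : ∑ j, (P' i j - P i j) * g j
          = ∑ j, P' i j * g j - ∑ j, P i j * g j := by
        rw [← Finset.sum_sub_distrib]
        exact Finset.sum_congr rfl fun j _ => by ring
      rw [h5]; ring
    simp_rw [h, Finset.sum_add_distrib, Finset.sum_sub_distrib, hsum]
    try rw [hspg, hsp'g]
  rw [hR, hB, hA]
  linear_combination -hPo + hD
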